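/- Every partially ordered set P has a dense subset D (every element of P has an element of D below it) such that no element of D lies below |P|-many elements of D, where |P| is the cardinality of P (assumed infinite). -/

import Mathlib

open Cardinal

universe u

/-- Every infinite poset `P` has a dense subset `D` (every element of `P` has an
element of `D` below it) that is `|P|^op`-like: no element of `D` is below
`|P|`-many elements of `D`. -/
theorem exists_dense_card_opLike {α : Type u} [PartialOrder α] [Infinite α] :
    ∃ D : Set α, (∀ p : α, ∃ d ∈ D, d ≤ p) ∧
      ∀ d ∈ D, #{e : α // e ∈ D ∧ d ≤ e} < #α := by
  classical
  obtain ⟨e⟩ : Nonempty (α ≃ (#α).ord.ToType) :=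
    Cardinal.eq.mp (Cardinal.mk_ord_toType #α).symm
  have wf : WellFounded ((· < ·) : (#α).ord.ToType → (#α).ord.ToType → Prop) :=
    IsWellFounded.wf
  have hne : ∀ p : α, {b : (#α).ord.ToType | e.symm b ≤ p}.Nonempty :=
    fun p => ⟨e p, by simp⟩
  set c : α → (#α).ord.ToType := fun p => wf.min _ (hne p) with hc
  have hle : ∀ p, e.symm (c p) ≤ p := fun p => wf.min_mem _ (hne p)
  have hmin : ∀ p b, e.symm b ≤ p → c p ≤ b := by
    intro p b hb
    exact not_lt.mp (wf.not_lt_min _ hb)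
  set d : α → α := fun p => e.symm (c p) with hd
  have hcd : ∀ p, c (d p) = c p := by
    intro p
    exact le_antisymm (hmin _ _ le_rfl) (hmin _ _ ((hle (d p)).trans (hle p)))
  have hdd : ∀ p, d (d p) = d p := by
    intro p; exact congrArg e.symm (hcd p)
  refine ⟨Set.range d, fun p => ⟨d p, Set.mem_range_self p, hle p⟩, ?_⟩
  rintro dd ⟨p, rfl⟩
  have hub : ∀ x : α, d p ≤ x → c x ≤ c (d p) := by
    intro x hx
    refine hmin _ _ ?_
    show d (d p) ≤ x
    rw [hdd p]; exact hx
  have key : #{x : α // x ∈ Set.range d ∧ d p ≤ x} ≤ #(Set.Iic (c (d p))) := by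
    refine Cardinal.mk_le_of_injective
      (f := fun x => (⟨c x.1, hub x.1 x.2.2⟩ : Set.Iic (c (d p)))) ?_
    rintro ⟨x, ⟨q, rfl⟩, hx⟩ ⟨y, ⟨r, rfl⟩, hy⟩ h
    simp only [Subtype.mk.injEq] at h ⊢
    have : e.symm (c (d q)) = e.symm (c (d r)) := congrArg (fun z => e.symm z.1) h
    simpa only [hcd] using this
  refine key.trans_lt ?_
  have h1 : Set.Iic (c (d p)) = insert (c (d p)) (Set.Iio (c (d p))) := by
    rw [Set.Iio_insert]
  rw [h1]
  refine (Cardinal.mk_insert_le).trans_lt ?_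
  exact Cardinal.add_lt_of_lt (Cardinal.infinite_iff.mp ‹Infinite α›)
    (Cardinal.mk_Iio_ord_toType _)
    (Cardinal.one_lt_aleph0.trans_le (Cardinal.infinite_iff.mp ‹Infinite α›))
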